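/- In finite dimensions, let M be a matrix with M + M* > 0 (strictly positive definite symmetric part) and A a symmetric matrix. If MAY = μY with Re μ > 0 (resp. Re μ < 0) and Y ≠ 0, then ⟨Y, AY⟩ > 0 (resp. ⟨Y, AY⟩ < 0). Consequently the number of eigenvalues of MA with positive real part is at most σ_+(A) and the number with negative real part is at most σ_−(A), counting the span of eigenvectors. -/

import Mathlib

open Module Matrix
open scoped ComplexOrder

noncomputable def sigNegOp {E : Type*} [NormedAddCommGroup E]
    [InnerProductSpace ℂ E] (Q : E →ₗ[ℂ] E) : ℕ∞ :=
  sSup {n : ℕ∞ | ∃ V : Submodule ℂ E, V ≠ ⊥ ∧ FiniteDimensional ℂ V ∧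
    n = (Module.finrank ℂ V : ℕ∞) ∧ ∀ x ∈ V, x ≠ 0 → ((inner ℂ x (Q x) : ℂ)).re < 0}

noncomputable def sigPosOp {E : Type*} [NormedAddCommGroup E]
    [InnerProductSpace ℂ E] (Q : E →ₗ[ℂ] E) : ℕ∞ :=
  sSup {n : ℕ∞ | ∃ V : Submodule ℂ E, V ≠ ⊥ ∧ FiniteDimensional ℂ V ∧
    n = (Module.finrank ℂ V : ℕ∞) ∧ ∀ x ∈ V, x ≠ 0 → 0 < ((inner ℂ x (Q x) : ℂ)).re}

open MeasureTheory Set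
open scoped ComplexConjugate



lemma cexp_integrableOn_Ioi' {c : ℂ} (hc : 0 < c.re) :
    IntegrableOn (fun t : ℝ => Complex.exp (-(c * t))) (Set.Ioi (0:ℝ)) := by
  apply Integrable.mono' (exp_neg_integrableOn_Ioi 0 hc)
  · exact (Complex.continuous_exp.comp (by continuity)).aestronglyMeasurable
  · filter_upwards with t
    rw [Complex.norm_exp]
    simp

lemma integral_cexp_Ioi' {c : ℂ} (hc : 0 < c.re) :
    ∫ t in Set.Ioi (0:ℝ), Complex.exp (-(c * t)) = 1 / c := by
  have hne : c ≠ 0 := fun h => by simp [h] at hc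
  have hderiv : ∀ τ : ℝ, τ ∈ Set.Ici (0:ℝ) →
      HasDerivAt (fun t : ℝ => -Complex.exp (-(c * t)) / c)
        (Complex.exp (-(c * τ))) τ := by
    intro τ _
    have h1 : HasDerivAt (fun t : ℝ => -(c * t)) (-c) τ := by
      simpa using (Complex.ofRealCLM.hasDerivAt.const_mul c).fun_neg
    have h2 := (h1.cexp).neg.div_const c
    simpa [mul_comm, mul_div_assoc, mul_div_cancel_left₀ _ hne] using h2
  have htend : Filter.Tendsto (fun t : ℝ => -Complex.exp (-(c * t)) / c)
      Filter.atTop (nhds 0) := by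
    rw [tendsto_zero_iff_norm_tendsto_zero]
    have h0 : Filter.Tendsto (fun t : ℝ => Real.exp (-(c.re * t)) / ‖c‖)
        Filter.atTop (nhds 0) := by
      have h1 : Filter.Tendsto (fun t : ℝ => c.re * t) Filter.atTop Filter.atTop :=
        Filter.Tendsto.const_mul_atTop hc Filter.tendsto_id
      have h2 := (Real.tendsto_exp_neg_atTop_nhds_zero.comp h1)
      simpa using h2.div_const ‖c‖
    refine h0.congr fun t => ?_
    rw [norm_div, norm_neg, Complex.norm_exp]
    simp
  have := integral_Ioi_of_hasDerivAt_of_tendsto' hderiv (cexp_integrableOn_Ioi' hc) htend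
  rw [this]
  simp [neg_div]

variable {n : ℕ}

lemma toEuclideanLin_mul_apply (M A : Matrix (Fin n) (Fin n) ℂ)
    (v : EuclideanSpace ℂ (Fin n)) :
    toEuclideanLin (M * A) v = toEuclideanLin M (toEuclideanLin A v) := by
  simp [Matrix.toEuclideanLin_apply, Matrix.mulVec_mulVec]

lemma posdef_inner_pos {S : Matrix (Fin n) (Fin n) ℂ} (hS : S.PosDef)
    {z : EuclideanSpace ℂ (Fin n)} (hz : z ≠ 0) :
    0 < (inner ℂ z (toEuclideanLin S z) : ℂ).re := by
  have hz' : (WithLp.equiv 2 (Fin n → ℂ)) z ≠ 0 := by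
    intro h; exact hz ((WithLp.equiv 2 (Fin n → ℂ)).injective (by simpa using h))
  have h := hS.re_dotProduct_pos hz'
  simp only [RCLike.re_to_complex] at h
  rw [EuclideanSpace.inner_eq_star_dotProduct, dotProduct_comm]
  exact h

lemma possemidef_inner_nonneg {S : Matrix (Fin n) (Fin n) ℂ} (hS : S.PosSemidef)
    (z : EuclideanSpace ℂ (Fin n)) :
    0 ≤ (inner ℂ z (toEuclideanLin S z) : ℂ).re := by
  have h := hS.re_dotProduct_nonneg ((WithLp.equiv 2 (Fin n → ℂ)) z)
  simp only [RCLike.re_to_complex] at h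
  rw [EuclideanSpace.inner_eq_star_dotProduct, dotProduct_comm]
  exact h

lemma key_relation (M A : Matrix (Fin n) (Fin n) ℂ) (hA : A.IsHermitian)
    {Y Z : EuclideanSpace ℂ (Fin n)} {μ ν : ℂ}
    (hY : toEuclideanLin (M * A) Y = μ • Y) (hZ : toEuclideanLin (M * A) Z = ν • Z) :
    (inner ℂ (toEuclideanLin A Y) (toEuclideanLin (M + Mᴴ) (toEuclideanLin A Z)) : ℂ)
      = (conj μ + ν) * inner ℂ Y (toEuclideanLin A Z) := by
  have hAadj : LinearMap.adjoint (toEuclideanLin A) = toEuclideanLin A := by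
    rw [← Matrix.toEuclideanLin_conjTranspose_eq_adjoint]
    exact congrArg _ hA
  have h1 : (inner ℂ (toEuclideanLin A Y) (toEuclideanLin M (toEuclideanLin A Z)) : ℂ)
      = ν * inner ℂ Y (toEuclideanLin A Z) := by
    rw [← toEuclideanLin_mul_apply, hZ, inner_smul_right]
    congr 1
    conv_lhs => rw [← hAadj]
    rw [LinearMap.adjoint_inner_left]
  have h2 : (inner ℂ (toEuclideanLin A Y) (toEuclideanLin Mᴴ (toEuclideanLin A Z)) : ℂ)
      = conj μ * inner ℂ Y (toEuclideanLin A Z) := by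
    rw [Matrix.toEuclideanLin_conjTranspose_eq_adjoint, LinearMap.adjoint_inner_right,
      ← toEuclideanLin_mul_apply, hY, inner_smul_left]
  rw [map_add, LinearMap.add_apply, inner_add_right, h1, h2]
  ring

lemma pointwise_pos (M A : Matrix (Fin n) (Fin n) ℂ)
    (hM : (M + Mᴴ).PosDef) (hA : A.IsHermitian)
    {Y : EuclideanSpace ℂ (Fin n)} {μ : ℂ} (hY : Y ≠ 0)
    (hE : toEuclideanLin (M * A) Y = μ • Y) (hμ : 0 < μ.re) :
    0 < (inner ℂ Y (toEuclideanLin A Y) : ℂ).re := by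
  have hAY : toEuclideanLin A Y ≠ 0 := by
    intro h
    have h0 : toEuclideanLin (M * A) Y = 0 := by
      rw [toEuclideanLin_mul_apply, h, map_zero]
    rw [hE] at h0
    rcases smul_eq_zero.mp h0 with h' | h'
    · rw [h'] at hμ; simp at hμ
    · exact hY h'
  have hpos := posdef_inner_pos hM hAY
  rw [key_relation M A hA hE hE] at hpos
  have hcm : conj μ + μ = ((2 * μ.re : ℝ) : ℂ) := by
    simp [Complex.ext_iff]; ring
  rw [hcm, Complex.re_ofReal_mul] at hpos
  nlinarith

lemma inner_pos_on_span (M A : Matrix (Fin n) (Fin n) ℂ)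
    (hM : (M + Mᴴ).PosDef) (hA : A.IsHermitian) :
    ∀ x ∈ Submodule.span ℂ {Y : EuclideanSpace ℂ (Fin n) | Y ≠ 0 ∧
      ∃ μ : ℂ, 0 < μ.re ∧ toEuclideanLin (M * A) Y = μ • Y},
      x ≠ 0 → 0 < ((inner ℂ x (toEuclideanLin A x) : ℂ)).re := by
  set s := {Y : EuclideanSpace ℂ (Fin n) | Y ≠ 0 ∧
      ∃ μ : ℂ, 0 < μ.re ∧ toEuclideanLin (M * A) Y = μ • Y} with hs
  obtain ⟨t, hts, hspan, hli⟩ := exists_linearIndependent ℂ s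
  haveI : Fintype t := hli.setFinite.fintype
  intro x hx hx0
  rw [← hspan] at hx
  have hx' : x ∈ Submodule.span ℂ (Set.range (Subtype.val : t → EuclideanSpace ℂ (Fin n))) := by
    rwa [Subtype.range_coe]
  obtain ⟨a, ha⟩ := (Submodule.mem_span_range_iff_exists_fun ℂ).mp hx'
  have hprop : ∀ i : t, (i : EuclideanSpace ℂ (Fin n)) ≠ 0 ∧
      ∃ μ : ℂ, 0 < μ.re ∧ toEuclideanLin (M * A) (i : EuclideanSpace ℂ (Fin n))
        = μ • (i : EuclideanSpace ℂ (Fin n)) := fun i => hts i.2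
  choose hne0 μf hμ heig using hprop
  set d : t → t → ℂ := fun i j => conj (μf i) + μf j with hd
  have hd_re : ∀ i j, 0 < (d i j).re := by
    intro i j
    simp only [hd, Complex.add_re, Complex.conj_re]
    exact add_pos (hμ i) (hμ j)
  have hd0 : ∀ i j, d i j ≠ 0 := fun i j h => by
    have := hd_re i j; rw [h] at this; simp at this
  set B : t → t → ℂ := fun i j =>
    inner ℂ (i : EuclideanSpace ℂ (Fin n)) (toEuclideanLin A (j : EuclideanSpace ℂ (Fin n))) with hB
  set C : t → t → ℂ := fun i j =>
    inner ℂ (toEuclideanLin A (i : EuclideanSpace ℂ (Fin n)))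
      (toEuclideanLin (M + Mᴴ) (toEuclideanLin A (j : EuclideanSpace ℂ (Fin n)))) with hC
  have hCB : ∀ i j, C i j = d i j * B i j := fun i j =>
    key_relation M A hA (heig i) (heig j)
  -- expansion of the quadratic form
  have hxB : (inner ℂ x (toEuclideanLin A x) : ℂ) = ∑ i : t, ∑ j : t, conj (a i) * a j * B i j := by
    conv_lhs => rw [← ha]
    rw [map_sum, sum_inner]
    refine Finset.sum_congr rfl fun i _ => ?_
    rw [inner_smul_left, inner_sum, Finset.mul_sum]
    refine Finset.sum_congr rfl fun j _ => ?_
    rw [LinearMap.map_smul, inner_smul_right]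
    simp only [hB]
    ring
  -- the integrand
  set F : ℝ → ℂ := fun τ => ∑ i : t, ∑ j : t,
    (conj (a i) * a j * C i j) * Complex.exp (-(d i j * τ)) with hF
  set xf : ℝ → EuclideanSpace ℂ (Fin n) := fun τ =>
    ∑ i : t, (a i * Complex.exp (-(μf i * τ))) • (i : EuclideanSpace ℂ (Fin n)) with hxf
  have hFrepr : ∀ τ : ℝ,
      (inner ℂ (toEuclideanLin A (xf τ)) (toEuclideanLin (M + Mᴴ) (toEuclideanLin A (xf τ))) : ℂ)
        = F τ := by
    intro τ
    simp only [hxf, hF, hC, hd]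
    simp only [map_sum, LinearMap.map_smul, sum_inner, inner_sum, inner_smul_left,
      inner_smul_right]
    simp only [Finset.mul_sum]
    conv_lhs => rw [Finset.sum_comm]
    refine Finset.sum_congr rfl fun i _ => ?_
    refine Finset.sum_congr rfl fun j _ => ?_
    rw [_root_.map_mul, ← Complex.exp_conj]
    have h1 : (starRingEnd ℂ) (-(μf i * (τ:ℂ))) = -(conj (μf i) * τ) := by
      simp [Complex.conj_ofReal]
    have he : Complex.exp (-(conj (μf i) * τ)) * Complex.exp (-(μf j * τ))
        = Complex.exp (-((conj (μf i) + μf j) * τ)) := by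
      rw [← Complex.exp_add]; congr 1; ring
    rw [h1, ← he]
    ring
  have hiint : ∀ i j : t, IntegrableOn
      (fun τ : ℝ => (conj (a i) * a j * C i j) * Complex.exp (-(d i j * τ))) (Set.Ioi 0) :=
    fun i j => (cexp_integrableOn_Ioi' (hd_re i j)).const_mul _
  have hFint : IntegrableOn F (Set.Ioi 0) := by
    rw [hF]
    exact integrable_finset_sum _ fun i _ => integrable_finset_sum _ fun j _ => hiint i j
  have hIF : ∫ τ in Set.Ioi (0:ℝ), F τ = (inner ℂ x (toEuclideanLin A x) : ℂ) := by
    rw [hF]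
    rw [integral_finset_sum _ fun i _ => integrable_finset_sum _ fun j _ => hiint i j]
    rw [hxB]
    refine Finset.sum_congr rfl fun i _ => ?_
    rw [integral_finset_sum _ fun j _ => hiint i j]
    refine Finset.sum_congr rfl fun j _ => ?_
    rw [MeasureTheory.integral_const_mul, integral_cexp_Ioi' (hd_re i j), hCB i j]
    have h0 := hd0 i j
    field_simp
  -- A x ≠ 0
  have hAx : toEuclideanLin A x ≠ 0 := by
    intro h
    have hTx : toEuclideanLin (M * A) x = 0 := by
      rw [toEuclideanLin_mul_apply, h, map_zero]
    have hTx2 : ∑ i : t, (a i * μf i) • (i : EuclideanSpace ℂ (Fin n)) = 0 := by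
      have : toEuclideanLin (M * A) x
          = ∑ i : t, (a i * μf i) • (i : EuclideanSpace ℂ (Fin n)) := by
        conv_lhs => rw [← ha]
        rw [map_sum]
        refine Finset.sum_congr rfl fun i _ => ?_
        rw [LinearMap.map_smul, heig i, smul_smul]
      rw [← this, hTx]
    have hz := Fintype.linearIndependent_iff.mp hli _ hTx2
    apply hx0
    rw [← ha]
    refine Finset.sum_eq_zero fun i _ => ?_
    have hμ0 : μf i ≠ 0 := fun h0 => by have := hμ i; rw [h0] at this; simp at this
    have : a i = 0 := by
      have := hz i
      rcases mul_eq_zero.mp this with h' | h'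
      · exact h'
      · exact absurd h' hμ0
    rw [this, zero_smul]
  have hxf0 : xf 0 = x := by
    rw [hxf, ← ha]
    refine Finset.sum_congr rfl fun i _ => ?_
    norm_num
  have hg0 : 0 < (F 0).re := by
    rw [← hFrepr 0, hxf0]
    exact posdef_inner_pos hM hAx
  have hgnn : ∀ τ : ℝ, 0 ≤ (F τ).re := fun τ => by
    rw [← hFrepr τ]
    exact possemidef_inner_nonneg hM.posSemidef _
  have hgcont : Continuous fun τ : ℝ => (F τ).re := by
    refine Complex.continuous_re.comp ?_
    rw [hF]
    refine continuous_finset_sum _ fun i _ => continuous_finset_sum _ fun j _ => ?_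
    exact continuous_const.mul
      (Complex.continuous_exp.comp ((continuous_const.mul Complex.continuous_ofReal).neg))
  have hre : ((inner ℂ x (toEuclideanLin A x) : ℂ)).re = ∫ τ in Set.Ioi (0:ℝ), (F τ).re := by
    have h2 := integral_re hFint
    simp only [RCLike.re_to_complex] at h2
    rw [← hIF]
    exact h2.symm
  rw [hre]
  rw [setIntegral_pos_iff_support_of_nonneg_ae
    (Filter.Eventually.of_forall hgnn) (by exact hFint.re)]
  have hopen : IsOpen {τ : ℝ | 0 < (F τ).re} := isOpen_lt continuous_const hgcont
  obtain ⟨δ, hδpos, hball⟩ := Metric.isOpen_iff.mp hopen 0 hg0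
  refine lt_of_lt_of_le ?_ (measure_mono (?_ : Set.Ioo 0 δ ⊆ _))
  · simp [Real.volume_Ioo, hδpos]
  · intro τ hτ
    have hmem : τ ∈ {τ : ℝ | 0 < (F τ).re} := by
      apply hball
      simp only [Metric.mem_ball, Real.dist_eq, sub_zero]
      rw [abs_of_pos hτ.1]; exact hτ.2
    exact ⟨ne_of_gt hmem, hτ.1⟩

lemma pointwise_neg (M A : Matrix (Fin n) (Fin n) ℂ)
    (hM : (M + Mᴴ).PosDef) (hA : A.IsHermitian)
    {Y : EuclideanSpace ℂ (Fin n)} {μ : ℂ} (hY : Y ≠ 0)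
    (hE : toEuclideanLin (M * A) Y = μ • Y) (hμ : μ.re < 0) :
    (inner ℂ Y (toEuclideanLin A Y) : ℂ).re < 0 := by
  have hE' : toEuclideanLin (M * (-A)) Y = (-μ) • Y := by
    rw [mul_neg, map_neg, LinearMap.neg_apply, hE, neg_smul]
  have h := pointwise_pos M (-A) hM hA.neg hY hE' (by simpa using hμ)
  rw [map_neg, LinearMap.neg_apply, inner_neg_right, Complex.neg_re] at h
  linarith

lemma span_le_sigPos (M A : Matrix (Fin n) (Fin n) ℂ)
    (hM : (M + Mᴴ).PosDef) (hA : A.IsHermitian) :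
    ((Module.finrank ℂ ↥(Submodule.span ℂ {Y : EuclideanSpace ℂ (Fin n) | Y ≠ 0 ∧
        ∃ μ : ℂ, 0 < μ.re ∧ toEuclideanLin (M * A) Y = μ • Y}) : ℕ) : ℕ∞)
      ≤ sigPosOp (toEuclideanLin A) := by
  by_cases hbot : Submodule.span ℂ {Y : EuclideanSpace ℂ (Fin n) | Y ≠ 0 ∧
      ∃ μ : ℂ, 0 < μ.re ∧ toEuclideanLin (M * A) Y = μ • Y} = ⊥
  · rw [hbot, finrank_bot]
    simp
  · exact le_sSup ⟨_, hbot, inferInstance, rfl, inner_pos_on_span M A hM hA⟩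

lemma neg_set_eq (M A : Matrix (Fin n) (Fin n) ℂ) :
    {Y : EuclideanSpace ℂ (Fin n) | Y ≠ 0 ∧
      ∃ μ : ℂ, μ.re < 0 ∧ toEuclideanLin (M * A) Y = μ • Y}
    = {Y : EuclideanSpace ℂ (Fin n) | Y ≠ 0 ∧
      ∃ μ : ℂ, 0 < μ.re ∧ toEuclideanLin (M * (-A)) Y = μ • Y} := by
  have hneg : ∀ Y : EuclideanSpace ℂ (Fin n),
      toEuclideanLin (M * (-A)) Y = -(toEuclideanLin (M * A) Y) := by
    intro Y; rw [mul_neg, map_neg, LinearMap.neg_apply]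
  ext Y
  simp only [Set.mem_setOf_eq]
  constructor
  · rintro ⟨h0, μ, hμ, hE⟩
    exact ⟨h0, -μ, by simpa using hμ, by rw [hneg, hE, neg_smul]⟩
  · rintro ⟨h0, μ, hμ, hE⟩
    rw [hneg] at hE
    exact ⟨h0, -μ, by simpa using hμ, by rw [neg_smul]; exact neg_eq_iff_eq_neg.mp hE⟩

lemma sigPos_neg_eq (A : Matrix (Fin n) (Fin n) ℂ) :
    sigPosOp (toEuclideanLin (-A)) = sigNegOp (toEuclideanLin A) := by
  unfold sigPosOp sigNegOp
  congr 1
  ext m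
  simp only [Set.mem_setOf_eq, map_neg, LinearMap.neg_apply, inner_neg_right,
    Complex.neg_re, neg_pos]

/-- Counting inequality for quasi-gradient linearizations in finite dimensions:
eigenvectors of `MA` with eigenvalue of positive (negative) real part carry
positive (negative) `A`-energy, and the span of the unstable (stable)
eigenvectors has dimension at most `σ₊(A)` (`σ₋(A)`). -/
theorem eigenvalue_counting_inequality {n : ℕ}
    (M A : Matrix (Fin n) (Fin n) ℂ)
    (hM : (M + Mᴴ).PosDef) (hA : A.IsHermitian) :
    (∀ (Y : EuclideanSpace ℂ (Fin n)) (μ : ℂ), Y ≠ 0 →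
      Matrix.toEuclideanLin (M * A) Y = μ • Y →
      ((0 < μ.re → 0 < ((inner ℂ Y (Matrix.toEuclideanLin A Y) : ℂ)).re) ∧
       (μ.re < 0 → ((inner ℂ Y (Matrix.toEuclideanLin A Y) : ℂ)).re < 0))) ∧
    ((Module.finrank ℂ ↥(Submodule.span ℂ {Y : EuclideanSpace ℂ (Fin n) | Y ≠ 0 ∧
        ∃ μ : ℂ, 0 < μ.re ∧ Matrix.toEuclideanLin (M * A) Y = μ • Y}) : ℕ∞)
      ≤ sigPosOp (Matrix.toEuclideanLin A)) ∧
    ((Module.finrank ℂ ↥(Submodule.span ℂ {Y : EuclideanSpace ℂ (Fin n) | Y ≠ 0 ∧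
        ∃ μ : ℂ, μ.re < 0 ∧ Matrix.toEuclideanLin (M * A) Y = μ • Y}) : ℕ∞)
      ≤ sigNegOp (Matrix.toEuclideanLin A)) := by
  refine ⟨?_, ?_, ?_⟩
  · intro Y μ hY hE
    exact ⟨fun h => pointwise_pos M A hM hA hY hE h,
           fun h => pointwise_neg M A hM hA hY hE h⟩
  · exact span_le_sigPos M A hM hA
  · rw [neg_set_eq M A, ← sigPos_neg_eq A]
    exact span_le_sigPos M (-A) hM hA.neg
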